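/- arXiv:2601.14586 — 2 statements merged into one kernel-verified Lean document; each statement's English description precedes it below -/
import Mathlib

section
/- For an i.i.d. sequence with continuous CDF F, p = F(u) ∈ (0,1), q = 1 - p, the peak-based cluster size distribution satisfies P(S = 1) = 3p²q/(1 - p³), where S is the cluster size conditional on 0 being a local maximum above u. That is, P(X_{-1} ≤ u, X_1 ≤ u | X_0 > u, X_0 > X_{-1}, X_0 > X_1) = 3p²q/(1 - p³). -/
open MeasureTheory ProbabilityTheory
open scoped ENNReal

section PeakAux

variable (ν : Measure ℝ) [IsProbabilityMeasure ν]

lemma peak_diag2 (hν : ∀ x : ℝ, ν {x} = 0) :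
    (ν.prod ν) {x : ℝ × ℝ | x.1 = x.2} = 0 := by
  have hm : MeasurableSet {x : ℝ × ℝ | x.1 = x.2} :=
    measurableSet_eq_fun measurable_fst measurable_snd
  rw [Measure.prod_apply hm]
  have h : ∀ a : ℝ, ν (Prod.mk a ⁻¹' {x : ℝ × ℝ | x.1 = x.2}) = 0 := by
    intro a
    have he : (Prod.mk a ⁻¹' {x : ℝ × ℝ | x.1 = x.2}) = {a} := by
      ext b; simp [eq_comm]
    rw [he]; exact hν a
  rw [lintegral_congr h, lintegral_zero]

lemma peak_measS0 (u : ℝ) :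
    MeasurableSet {x : ℝ × ℝ × ℝ | u < x.2.1 ∧ x.1 < x.2.1 ∧ x.2.2 < x.2.1} := by
  refine (measurableSet_lt measurable_const (measurable_fst.comp measurable_snd)).inter
    ((measurableSet_lt measurable_fst (measurable_fst.comp measurable_snd)).inter
      (measurableSet_lt (measurable_snd.comp measurable_snd)
        (measurable_fst.comp measurable_snd)))

lemma peak_measS1 (u : ℝ) :
    MeasurableSet {x : ℝ × ℝ × ℝ | u < x.1 ∧ x.2.1 < x.1 ∧ x.2.2 < x.1} := by
  refine (measurableSet_lt measurable_const measurable_fst).inter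
    ((measurableSet_lt (measurable_fst.comp measurable_snd) measurable_fst).inter
      (measurableSet_lt (measurable_snd.comp measurable_snd) measurable_fst))

lemma peak_measS2 (u : ℝ) :
    MeasurableSet {x : ℝ × ℝ × ℝ | u < x.2.2 ∧ x.1 < x.2.2 ∧ x.2.1 < x.2.2} := by
  refine (measurableSet_lt measurable_const (measurable_snd.comp measurable_snd)).inter
    ((measurableSet_lt measurable_fst (measurable_snd.comp measurable_snd)).inter
      (measurableSet_lt (measurable_fst.comp measurable_snd)
        (measurable_snd.comp measurable_snd)))

/-- The key computation: probability that the middle coordinate is the strict max and exceeds u. -/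
lemma peak_S0_measure (hν : ∀ x : ℝ, ν {x} = 0) (u : ℝ) :
    (ν.prod (ν.prod ν)) {x : ℝ × ℝ × ℝ | u < x.2.1 ∧ x.1 < x.2.1 ∧ x.2.2 < x.2.1}
      = (1 - (ν (Set.Iic u)) ^ 3) / 3 := by
  set p : ℝ≥0∞ := ν (Set.Iic u) with hp
  set π : Measure (ℝ × ℝ × ℝ) := ν.prod (ν.prod ν) with hπ
  set S0 : Set (ℝ × ℝ × ℝ) := {x | u < x.2.1 ∧ x.1 < x.2.1 ∧ x.2.2 < x.2.1} with hS0
  set S1 : Set (ℝ × ℝ × ℝ) := {x | u < x.1 ∧ x.2.1 < x.1 ∧ x.2.2 < x.1} with hS1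
  set S2 : Set (ℝ × ℝ × ℝ) := {x | u < x.2.2 ∧ x.1 < x.2.2 ∧ x.2.1 < x.2.2} with hS2
  have mS0 := peak_measS0 u
  have mS1 := peak_measS1 u
  have mS2 := peak_measS2 u
  -- S2 has same measure as S0 via (a,(b,c)) ↦ (a,(c,b))
  have hmapτ : Measure.map (Prod.map (id : ℝ → ℝ) (Prod.swap : ℝ × ℝ → ℝ × ℝ)) π = π := by
    rw [hπ, ← Measure.map_prod_map _ _ measurable_id measurable_swap, Measure.map_id,
      Measure.prod_swap]
  have h20 : π S2 = π S0 := by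
    conv_rhs => rw [← hmapτ]
    rw [Measure.map_apply (measurable_id.prodMap measurable_swap) mS0]
    rfl
  -- S1 has same measure as S0 via σ : (a,(b,c)) ↦ (b,(a,c))
  have hσm : Measurable (fun x : ℝ × ℝ × ℝ => (x.2.1, (x.1, x.2.2))) := by fun_prop
  have hmapσ : Measure.map (fun x : ℝ × ℝ × ℝ => (x.2.1, (x.1, x.2.2))) π = π := by
    have h1 : Measure.map (⇑(MeasurableEquiv.prodAssoc : (ℝ × ℝ) × ℝ ≃ᵐ ℝ × ℝ × ℝ))
        ((ν.prod ν).prod ν) = π := Measure.prodAssoc_prod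
    have h3 : Measure.map (Prod.map (Prod.swap : ℝ × ℝ → ℝ × ℝ) (id : ℝ → ℝ))
        ((ν.prod ν).prod ν) = (ν.prod ν).prod ν := by
      rw [← Measure.map_prod_map _ _ measurable_swap measurable_id, Measure.map_id,
        Measure.prod_swap]
    calc Measure.map (fun x : ℝ × ℝ × ℝ => (x.2.1, (x.1, x.2.2))) π
        = Measure.map (fun x : ℝ × ℝ × ℝ => (x.2.1, (x.1, x.2.2)))
            (Measure.map (⇑(MeasurableEquiv.prodAssoc : (ℝ × ℝ) × ℝ ≃ᵐ ℝ × ℝ × ℝ))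
              ((ν.prod ν).prod ν)) := by rw [h1]
      _ = Measure.map ((fun x : ℝ × ℝ × ℝ => (x.2.1, (x.1, x.2.2))) ∘
            ⇑(MeasurableEquiv.prodAssoc : (ℝ × ℝ) × ℝ ≃ᵐ ℝ × ℝ × ℝ)) ((ν.prod ν).prod ν) :=
          Measure.map_map hσm MeasurableEquiv.prodAssoc.measurable
      _ = Measure.map (⇑(MeasurableEquiv.prodAssoc : (ℝ × ℝ) × ℝ ≃ᵐ ℝ × ℝ × ℝ) ∘
            Prod.map Prod.swap id) ((ν.prod ν).prod ν) := rfl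
      _ = Measure.map (⇑(MeasurableEquiv.prodAssoc : (ℝ × ℝ) × ℝ ≃ᵐ ℝ × ℝ × ℝ))
            (Measure.map (Prod.map Prod.swap id) ((ν.prod ν).prod ν)) :=
          (Measure.map_map MeasurableEquiv.prodAssoc.measurable
            (measurable_swap.prodMap measurable_id)).symm
      _ = π := by rw [h3, h1]
  have h10 : π S1 = π S0 := by
    conv_rhs => rw [← hmapσ]
    rw [Measure.map_apply hσm mS0]
    rfl
  -- the tie sets are null
  have hd1 : π {x : ℝ × ℝ × ℝ | x.1 = x.2.1} = 0 := by
    have hm : MeasurableSet {x : ℝ × ℝ × ℝ | x.1 = x.2.1} :=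
      measurableSet_eq_fun measurable_fst (measurable_fst.comp measurable_snd)
    rw [hπ, Measure.prod_apply hm]
    have h : ∀ a : ℝ, (ν.prod ν) (Prod.mk a ⁻¹' {x : ℝ × ℝ × ℝ | x.1 = x.2.1}) = 0 := by
      intro a
      have he : Prod.mk a ⁻¹' {x : ℝ × ℝ × ℝ | x.1 = x.2.1} = ({a} : Set ℝ) ×ˢ Set.univ := by
        ext ⟨b1, b2⟩; simp [eq_comm]
      rw [he, Measure.prod_prod, hν a, zero_mul]
    rw [lintegral_congr h, lintegral_zero]
  have hd2 : π {x : ℝ × ℝ × ℝ | x.1 = x.2.2} = 0 := by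
    have hm : MeasurableSet {x : ℝ × ℝ × ℝ | x.1 = x.2.2} :=
      measurableSet_eq_fun measurable_fst (measurable_snd.comp measurable_snd)
    rw [hπ, Measure.prod_apply hm]
    have h : ∀ a : ℝ, (ν.prod ν) (Prod.mk a ⁻¹' {x : ℝ × ℝ × ℝ | x.1 = x.2.2}) = 0 := by
      intro a
      have he : Prod.mk a ⁻¹' {x : ℝ × ℝ × ℝ | x.1 = x.2.2} = Set.univ ×ˢ ({a} : Set ℝ) := by
        ext ⟨b1, b2⟩; simp [eq_comm]
      rw [he, Measure.prod_prod, hν a, mul_zero]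
    rw [lintegral_congr h, lintegral_zero]
  have hd3 : π {x : ℝ × ℝ × ℝ | x.2.1 = x.2.2} = 0 := by
    have he : {x : ℝ × ℝ × ℝ | x.2.1 = x.2.2} = Set.univ ×ˢ {y : ℝ × ℝ | y.1 = y.2} := by
      ext ⟨a, b, c⟩; simp
    rw [hπ, he, Measure.prod_prod, peak_diag2 ν hν, mul_zero]
  -- union with ties covers the complement of "all ≤ u"
  have hsub : (Set.Iic u ×ˢ (Set.Iic u ×ˢ Set.Iic u))ᶜ ⊆
      (S0 ∪ S1 ∪ S2) ∪ ({x : ℝ × ℝ × ℝ | x.1 = x.2.1} ∪ {x : ℝ × ℝ × ℝ | x.1 = x.2.2} ∪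
        {x : ℝ × ℝ × ℝ | x.2.1 = x.2.2}) := by
    rintro ⟨a, b, c⟩ hx
    simp only [Set.mem_compl_iff, Set.mem_prod, Set.mem_Iic, not_and_or, not_le] at hx
    by_cases hab : a = b
    · exact Or.inr (Or.inl (Or.inl hab))
    by_cases hac : a = c
    · exact Or.inr (Or.inl (Or.inr hac))
    by_cases hbc : b = c
    · exact Or.inr (Or.inr hbc)
    left
    simp only [hS0, hS1, hS2, Set.mem_union, Set.mem_setOf_eq]
    rcases lt_trichotomy a b with h1 | h1 | h1
    · rcases lt_trichotomy b c with h2 | h2 | h2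
      · -- c is max
        exact Or.inr ⟨by rcases hx with h|h|h <;> linarith, by linarith, h2⟩
      · exact absurd h2 hbc
      · -- b is max
        exact Or.inl (Or.inl ⟨by rcases hx with h|h|h <;> linarith, h1, h2⟩)
    · exact absurd h1 hab
    · rcases lt_trichotomy a c with h2 | h2 | h2
      · -- c is max
        exact Or.inr ⟨by rcases hx with h|h|h <;> linarith, h2, by linarith⟩
      · exact absurd h2 hac
      · -- a is max
        exact Or.inl (Or.inr ⟨by rcases hx with h|h|h <;> linarith, h1, h2⟩)
  have hsub2 : S0 ∪ S1 ∪ S2 ⊆ (Set.Iic u ×ˢ (Set.Iic u ×ˢ Set.Iic u))ᶜ := by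
    rintro ⟨a, b, c⟩ hx
    simp only [Set.mem_compl_iff, Set.mem_prod, Set.mem_Iic, not_and_or, not_le]
    simp only [hS0, hS1, hS2, Set.mem_union, Set.mem_setOf_eq] at hx
    rcases hx with (h | h) | h
    · exact Or.inr (Or.inl h.1)
    · exact Or.inl h.1
    · exact Or.inr (Or.inr h.1)
  have hC : π (Set.Iic u ×ˢ (Set.Iic u ×ˢ Set.Iic u)) = p ^ 3 := by
    rw [hπ, Measure.prod_prod, Measure.prod_prod, ← hp]; ring
  have hCc : π ((Set.Iic u ×ˢ (Set.Iic u ×ˢ Set.Iic u))ᶜ) = 1 - p ^ 3 := by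
    rw [measure_compl (measurableSet_Iic.prod (measurableSet_Iic.prod measurableSet_Iic))
      (measure_ne_top _ _), hC]
    congr 1
    exact measure_univ
  have hUnion : π (S0 ∪ S1 ∪ S2) = 1 - p ^ 3 := by
    refine le_antisymm (hCc ▸ measure_mono hsub2) ?_
    rw [← hCc]
    calc π ((Set.Iic u ×ˢ (Set.Iic u ×ˢ Set.Iic u))ᶜ)
        ≤ π ((S0 ∪ S1 ∪ S2) ∪ ({x : ℝ × ℝ × ℝ | x.1 = x.2.1} ∪
            {x : ℝ × ℝ × ℝ | x.1 = x.2.2} ∪ {x : ℝ × ℝ × ℝ | x.2.1 = x.2.2})) :=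
          measure_mono hsub
      _ ≤ π (S0 ∪ S1 ∪ S2) + π ({x : ℝ × ℝ × ℝ | x.1 = x.2.1} ∪
            {x : ℝ × ℝ × ℝ | x.1 = x.2.2} ∪ {x : ℝ × ℝ × ℝ | x.2.1 = x.2.2}) :=
          measure_union_le _ _
      _ ≤ π (S0 ∪ S1 ∪ S2) + 0 := by
          gcongr
          refine le_trans (measure_union_le _ _) ?_
          rw [hd3]
          refine le_trans (add_le_add_left (measure_union_le _ _) 0) ?_
          rw [hd1, hd2]; simp
      _ = π (S0 ∪ S1 ∪ S2) := add_zero _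
  have hdis01 : Disjoint S0 S1 := by
    rw [Set.disjoint_left]
    rintro ⟨a, b, c⟩ h0 h1
    simp only [hS0, hS1, Set.mem_setOf_eq] at h0 h1
    exact absurd h1.2.1 (not_lt.mpr h0.2.1.le)
  have hdis02 : Disjoint S0 S2 := by
    rw [Set.disjoint_left]
    rintro ⟨a, b, c⟩ h0 h2
    simp only [hS0, hS2, Set.mem_setOf_eq] at h0 h2
    exact absurd h2.2.2 (not_lt.mpr h0.2.2.le)
  have hdis12 : Disjoint S1 S2 := by
    rw [Set.disjoint_left]
    rintro ⟨a, b, c⟩ h1 h2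
    simp only [hS1, hS2, Set.mem_setOf_eq] at h1 h2
    exact absurd h2.2.1 (not_lt.mpr h1.2.2.le)
  have hadd : π (S0 ∪ S1 ∪ S2) = π S0 + π S1 + π S2 := by
    rw [measure_union (Disjoint.union_left hdis02 hdis12) mS2, measure_union hdis01 mS1]
  have h3S0 : 3 * π S0 = 1 - p ^ 3 := by
    rw [← hUnion, hadd, h10, h20]; ring
  rw [ENNReal.eq_div_iff (by norm_num) (by norm_num), h3S0]

end PeakAux

/-- For an i.i.d. sequence with continuous CDF, `p = P(X 0 ≤ u) ∈ (0,1)`,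
`q = 1 - p`, the peak-based cluster size distribution satisfies
`P(X_{-1} ≤ u, X_1 ≤ u | X_0 > u, X_0 > X_{-1}, X_0 > X_1) = 3p²q/(1 - p³)`. -/
theorem peak_cluster_size_one
    {Ω : Type*} [MeasurableSpace Ω] (μ : Measure Ω) [IsProbabilityMeasure μ]
    (X : ℤ → Ω → ℝ) (hmeas : ∀ t, Measurable (X t))
    (hindep : iIndepFun X μ)
    (hident : ∀ t : ℤ, IdentDistrib (X t) (X 0) μ μ)
    (hcont : ∀ x : ℝ, μ {ω | X 0 ω = x} = 0)
    (u : ℝ) (p q : ℝ≥0∞)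
    (hp : μ {ω | X 0 ω ≤ u} = p) (hp0 : 0 < p) (hp1 : p < 1) (hq : q = 1 - p) :
    μ[{ω | X (-1) ω ≤ u ∧ X 1 ω ≤ u}
      | {ω | u < X 0 ω ∧ X (-1) ω < X 0 ω ∧ X 1 ω < X 0 ω}]
      = 3 * p ^ 2 * q / (1 - p ^ 3) := by
  classical
  set ν : Measure ℝ := μ.map (X 0) with hν
  have hXmeas : ∀ t : ℤ, AEMeasurable (X t) μ := fun t => (hmeas t).aemeasurable
  have : IsProbabilityMeasure ν := Measure.isProbabilityMeasure_map (hXmeas 0)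
  have hmapt : ∀ t : ℤ, μ.map (X t) = ν := fun t => (hident t).map_eq
  have hνsing : ∀ x : ℝ, ν {x} = 0 := by
    intro x
    rw [hν, Measure.map_apply (hmeas 0) (measurableSet_singleton x)]
    exact hcont x
  have hνIic : ν (Set.Iic u) = p := by
    rw [hν, Measure.map_apply (hmeas 0) measurableSet_Iic]; exact hp
  have hνIoi : ν (Set.Ioi u) = 1 - p := by
    have hcpl : Set.Ioi u = (Set.Iic u)ᶜ := (Set.compl_Iic).symm
    rw [hcpl, measure_compl measurableSet_Iic (measure_ne_top _ _), hνIic, measure_univ]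
  have hpairIndep : IndepFun (X 0) (X 1) μ := hindep.indepFun (by decide)
  have hpairmap : μ.map (fun ω => (X 0 ω, X 1 ω)) = ν.prod ν := by
    rw [(indepFun_iff_map_prod_eq_prod_map_map (hXmeas 0) (hXmeas 1)).mp hpairIndep,
      hmapt 0, hmapt 1]
  have hTindep : IndepFun (X (-1)) (fun ω => (X 0 ω, X 1 ω)) μ :=
    (hindep.indepFun_prodMk hmeas 0 1 (-1) (by decide) (by decide)).symm
  have hpairmeas : Measurable (fun ω => (X 0 ω, X 1 ω)) := (hmeas 0).prodMk (hmeas 1)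
  have hT : μ.map (fun ω => (X (-1) ω, (X 0 ω, X 1 ω))) = ν.prod (ν.prod ν) := by
    rw [(indepFun_iff_map_prod_eq_prod_map_map (hXmeas (-1)) hpairmeas.aemeasurable).mp hTindep,
      hmapt (-1), hpairmap]
  have hTmeas : Measurable (fun ω => (X (-1) ω, (X 0 ω, X 1 ω))) :=
    (hmeas (-1)).prodMk hpairmeas
  set B : Set Ω := {ω | u < X 0 ω ∧ X (-1) ω < X 0 ω ∧ X 1 ω < X 0 ω} with hB
  set A : Set Ω := {ω | X (-1) ω ≤ u ∧ X 1 ω ≤ u} with hA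
  have hBpre : B = (fun ω => (X (-1) ω, (X 0 ω, X 1 ω))) ⁻¹'
      {x : ℝ × ℝ × ℝ | u < x.2.1 ∧ x.1 < x.2.1 ∧ x.2.2 < x.2.1} := rfl
  have hBmeas : MeasurableSet B := hBpre ▸ hTmeas (peak_measS0 u)
  have hμB : μ B = (1 - p ^ 3) / 3 := by
    rw [hBpre, ← Measure.map_apply hTmeas (peak_measS0 u), hT, peak_S0_measure ν hνsing u, hνIic]
  have hBA : B ∩ A = (fun ω => (X (-1) ω, (X 0 ω, X 1 ω))) ⁻¹'
      (Set.Iic u ×ˢ (Set.Ioi u ×ˢ Set.Iic u)) := by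
    ext ω
    simp only [hB, hA, Set.mem_inter_iff, Set.mem_setOf_eq, Set.mem_preimage, Set.mem_prod,
      Set.mem_Iic, Set.mem_Ioi]
    constructor
    · rintro ⟨⟨h1, h2, h3⟩, h4, h5⟩; exact ⟨h4, h1, h5⟩
    · rintro ⟨h1, h2, h3⟩
      exact ⟨⟨h2, lt_of_le_of_lt h1 h2, lt_of_le_of_lt h3 h2⟩, h1, h3⟩
  have hμBA : μ (B ∩ A) = p * ((1 - p) * p) := by
    rw [hBA, ← Measure.map_apply hTmeas
        (measurableSet_Iic.prod (measurableSet_Ioi.prod measurableSet_Iic)), hT,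
      Measure.prod_prod, Measure.prod_prod, hνIic, hνIoi]
  have hcond : μ[A | B] = (μ B)⁻¹ * μ (B ∩ A) := cond_apply hBmeas μ A
  rw [hcond, hμB, hμBA, hq]
  -- arithmetic in ℝ≥0∞
  have hple : p ^ 3 ≤ p := by
    calc p ^ 3 = p * p * p := by ring
    _ ≤ 1 * 1 * p := by gcongr <;> exact hp1.le
    _ = p := by ring
  have hplt : p ^ 3 < 1 := lt_of_le_of_lt hple hp1
  have hr0 : (1 : ℝ≥0∞) - p ^ 3 ≠ 0 := (tsub_pos_iff_lt.mpr hplt).ne'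
  have hrt : (1 : ℝ≥0∞) - p ^ 3 ≠ ∞ := (tsub_le_self.trans_lt ENNReal.one_lt_top).ne
  rw [ENNReal.eq_div_iff hr0 hrt,
    ENNReal.inv_div (Or.inl (by norm_num)) (Or.inl (by norm_num)),
    ENNReal.div_eq_inv_mul,
    show (1 - p ^ 3) * ((1 - p ^ 3)⁻¹ * 3 * (p * ((1 - p) * p)))
      = ((1 - p ^ 3) * (1 - p ^ 3)⁻¹) * (3 * (p * ((1 - p) * p))) from by ring,
    ENNReal.mul_inv_cancel hr0 hrt, one_mul]
  ring
end

section
/- For an i.i.d. sequence with continuous CDF F and p = F(u), P(X_{-2} ≤ u, X_0 > X_{-1} > u, X_0 > X_1 > u, X_2 ≤ u) = p²q³/3, where q = 1 - p. -/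
open MeasureTheory ProbabilityTheory Set
open scoped ENNReal

/-- For an i.i.d. sequence with continuous CDF and `p = P(X 0 ≤ u)`,
`q = 1 - p`, one has
`P(X_{-2} ≤ u, X_0 > X_{-1} > u, X_0 > X_1 > u, X_2 ≤ u) = p²q³/3`. -/
theorem prob_interior_peak_cluster_three
    {Ω : Type*} [MeasurableSpace Ω] (μ : Measure Ω) [IsProbabilityMeasure μ]
    (X : ℤ → Ω → ℝ) (hmeas : ∀ t, Measurable (X t))
    (hindep : iIndepFun (m := fun _ : ℤ => (inferInstance : MeasurableSpace ℝ)) X μ)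
    (hident : ∀ t : ℤ, IdentDistrib (X t) (X 0) μ μ)
    (hcont : ∀ x : ℝ, μ {ω | X 0 ω = x} = 0)
    (u : ℝ) (p q : ℝ≥0∞)
    (hp : μ {ω | X 0 ω ≤ u} = p) (hq : q = 1 - p) :
    μ {ω | X (-2) ω ≤ u ∧ (X (-1) ω < X 0 ω ∧ u < X (-1) ω) ∧
        (X 1 ω < X 0 ω ∧ u < X 1 ω) ∧ X 2 ω ≤ u}
      = p ^ 2 * q ^ 3 / 3 := by
  classical
  set ν : Measure ℝ := μ.map (X 0) with hν
  have hνprob : IsProbabilityMeasure ν := Measure.isProbabilityMeasure_map (hmeas 0).aemeasurable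
  have hlaw : ∀ t : ℤ, μ.map (X t) = ν := fun t => (hident t).map_eq
  -- singletons are ν-null
  have hatom : ∀ x : ℝ, ν {x} = 0 := by
    intro x
    rw [hν, Measure.map_apply (hmeas 0) (measurableSet_singleton x)]
    exact hcont x
  -- pair laws
  have hmap_pair : ∀ a b : ℤ, a ≠ b →
      μ.map (fun ω => (X a ω, X b ω)) = ν.prod ν := by
    intro a b hab
    rw [(indepFun_iff_map_prod_eq_prod_map_map (hmeas a).aemeasurable
      (hmeas b).aemeasurable).mp (hindep.indepFun hab), hlaw a, hlaw b]
  -- triple laws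
  have hmap_triple : ∀ a b c : ℤ, a ≠ b → a ≠ c → b ≠ c →
      μ.map (fun ω => (X a ω, (X b ω, X c ω))) = ν.prod (ν.prod ν) := by
    intro a b c hab hac hbc
    have h2 : IndepFun (X a) (fun ω => (X b ω, X c ω)) μ :=
      (hindep.indepFun_prodMk hmeas b c a hab.symm hac.symm).symm
    rw [(indepFun_iff_map_prod_eq_prod_map_map (hmeas a).aemeasurable
      ((hmeas b).prodMk (hmeas c)).aemeasurable).mp h2, hlaw a, hmap_pair b c hbc]
  -- diagonal is null
  have hdiag : ∀ a b : ℤ, a ≠ b → μ {ω | X a ω = X b ω} = 0 := by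
    intro a b hab
    have hSm : MeasurableSet {pr : ℝ × ℝ | pr.1 = pr.2} :=
      measurableSet_eq_fun measurable_fst measurable_snd
    have : μ {ω | X a ω = X b ω}
        = (μ.map (fun ω => (X a ω, X b ω))) {pr : ℝ × ℝ | pr.1 = pr.2} := by
      rw [Measure.map_apply ((hmeas a).prodMk (hmeas b)) hSm]
      rfl
    rw [this, hmap_pair a b hab, Measure.prod_apply hSm]
    have : ∀ x : ℝ, ν (Prod.mk x ⁻¹' {pr : ℝ × ℝ | pr.1 = pr.2}) = 0 := by
      intro x
      have : Prod.mk x ⁻¹' {pr : ℝ × ℝ | pr.1 = pr.2} = {x} := by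
        ext y; simp [eq_comm]
      rw [this]; exact hatom x
    simp [this, hatom]
  -- measure of "strict max at c, all above u" events
  have hpeak : ∀ a b c : ℤ, a ≠ b → a ≠ c → b ≠ c →
      μ {ω | (X b ω < X a ω ∧ u < X b ω) ∧ (X c ω < X a ω ∧ u < X c ω)}
        = ∫⁻ x, ν (Ioo u x) ^ 2 ∂ν := by
    intro a b c hab hac hbc
    set S : Set (ℝ × ℝ × ℝ) :=
      {pr | (pr.2.1 < pr.1 ∧ u < pr.2.1) ∧ (pr.2.2 < pr.1 ∧ u < pr.2.2)} with hS
    have hSm : MeasurableSet S := by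
      apply MeasurableSet.inter
      · exact MeasurableSet.inter
          (measurableSet_lt (measurable_fst.comp measurable_snd) measurable_fst)
          (measurableSet_lt measurable_const (measurable_fst.comp measurable_snd))
      · exact MeasurableSet.inter
          (measurableSet_lt (measurable_snd.comp measurable_snd) measurable_fst)
          (measurableSet_lt measurable_const (measurable_snd.comp measurable_snd))
    have h1 : μ {ω | (X b ω < X a ω ∧ u < X b ω) ∧ (X c ω < X a ω ∧ u < X c ω)}
        = (μ.map (fun ω => (X a ω, (X b ω, X c ω)))) S := by
      rw [Measure.map_apply ((hmeas a).prodMk ((hmeas b).prodMk (hmeas c))) hSm]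
      rfl
    rw [h1, hmap_triple a b c hab hac hbc, Measure.prod_apply hSm]
    congr 1
    ext x
    have hx : Prod.mk x ⁻¹' S = (Ioo u x) ×ˢ (Ioo u x) := by
      ext yz
      simp only [hS, mem_preimage, mem_setOf_eq, mem_prod, mem_Ioo]
      tauto
    rw [hx, Measure.prod_prod, sq]
  -- measure of the box
  have hbox : ∀ a b c : ℤ, a ≠ b → a ≠ c → b ≠ c →
      μ {ω | u < X a ω ∧ u < X b ω ∧ u < X c ω} = ν (Ioi u) ^ 3 := by
    intro a b c hab hac hbc
    have hSm : MeasurableSet ((Ioi u) ×ˢ ((Ioi u) ×ˢ (Ioi u)) : Set (ℝ × ℝ × ℝ)) :=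
      measurableSet_Ioi.prod (measurableSet_Ioi.prod measurableSet_Ioi)
    have h1 : μ {ω | u < X a ω ∧ u < X b ω ∧ u < X c ω}
        = (μ.map (fun ω => (X a ω, (X b ω, X c ω))))
            ((Ioi u) ×ˢ ((Ioi u) ×ˢ (Ioi u))) := by
      rw [Measure.map_apply ((hmeas a).prodMk ((hmeas b).prodMk (hmeas c))) hSm]
      rfl
    rw [h1, hmap_triple a b c hab hac hbc, Measure.prod_prod, Measure.prod_prod]
    ring
  -- the three peak events
  set M0 : Set Ω := {ω | (X (-1) ω < X 0 ω ∧ u < X (-1) ω) ∧ (X 1 ω < X 0 ω ∧ u < X 1 ω)}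
    with hM0
  set Mm : Set Ω := {ω | (X 0 ω < X (-1) ω ∧ u < X 0 ω) ∧ (X 1 ω < X (-1) ω ∧ u < X 1 ω)}
    with hMm
  set Mp : Set Ω := {ω | (X (-1) ω < X 1 ω ∧ u < X (-1) ω) ∧ (X 0 ω < X 1 ω ∧ u < X 0 ω)}
    with hMp
  have hMmeas : ∀ (a b c : ℤ), MeasurableSet
      {ω | (X b ω < X a ω ∧ u < X b ω) ∧ (X c ω < X a ω ∧ u < X c ω)} := by
    intro a b c
    exact (((measurableSet_lt (hmeas b) (hmeas a)).inter
        (measurableSet_lt measurable_const (hmeas b))).inter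
      ((measurableSet_lt (hmeas c) (hmeas a)).inter
        (measurableSet_lt measurable_const (hmeas c))))
  have hM0meas : MeasurableSet M0 := hMmeas 0 (-1) 1
  have hMmmeas : MeasurableSet Mm := hMmeas (-1) 0 1
  have hMpmeas : MeasurableSet Mp := hMmeas 1 (-1) 0
  have hM0val : μ M0 = ∫⁻ x, ν (Ioo u x) ^ 2 ∂ν := hpeak 0 (-1) 1 (by decide) (by decide) (by decide)
  have hMmval : μ Mm = ∫⁻ x, ν (Ioo u x) ^ 2 ∂ν := hpeak (-1) 0 1 (by decide) (by decide) (by decide)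
  have hMpval : μ Mp = ∫⁻ x, ν (Ioo u x) ^ 2 ∂ν := hpeak 1 (-1) 0 (by decide) (by decide) (by decide)
  -- the union of the three peak events is a.e. the box
  have hsub : {ω | u < X (-1) ω ∧ u < X 0 ω ∧ u < X 1 ω} ⊆
      (M0 ∪ Mm ∪ Mp) ∪ ({ω | X (-1) ω = X 0 ω} ∪ {ω | X 0 ω = X 1 ω}
        ∪ {ω | X (-1) ω = X 1 ω}) := by
    intro ω hω
    obtain ⟨hx, hy, hz⟩ := hω
    simp only [hM0, hMm, hMp, mem_union, mem_setOf_eq]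
    rcases lt_trichotomy (X (-1) ω) (X 0 ω) with h1 | h1 | h1
    · rcases lt_trichotomy (X 0 ω) (X 1 ω) with h2 | h2 | h2
      · exact Or.inl (Or.inr ⟨⟨by linarith, hx⟩, ⟨h2, hy⟩⟩)
      · exact Or.inr (Or.inl (Or.inr h2))
      · exact Or.inl (Or.inl (Or.inl ⟨⟨h1, hx⟩, ⟨h2, hz⟩⟩))
    · exact Or.inr (Or.inl (Or.inl h1))
    · rcases lt_trichotomy (X (-1) ω) (X 1 ω) with h3 | h3 | h3
      · exact Or.inl (Or.inr ⟨⟨h3, hx⟩, ⟨by linarith, hy⟩⟩)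
      · exact Or.inr (Or.inr h3)
      · exact Or.inl (Or.inl (Or.inr ⟨⟨h1, hy⟩, ⟨h3, hz⟩⟩))
  have hsub' : M0 ∪ Mm ∪ Mp ⊆ {ω | u < X (-1) ω ∧ u < X 0 ω ∧ u < X 1 ω} := by
    intro ω hω
    simp only [hM0, hMm, hMp, mem_union, mem_setOf_eq] at hω ⊢
    rcases hω with (h | h) | h
    · exact ⟨h.1.2, lt_trans h.1.2 h.1.1, h.2.2⟩
    · exact ⟨lt_trans h.1.2 h.1.1, h.1.2, h.2.2⟩
    · exact ⟨h.1.2, h.2.2, lt_trans h.2.2 h.2.1⟩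
  have hties : μ ({ω | X (-1) ω = X 0 ω} ∪ {ω | X 0 ω = X 1 ω}
      ∪ {ω | X (-1) ω = X 1 ω}) = 0 := by
    refine le_antisymm ?_ (zero_le (a := _))
    calc μ _ ≤ μ {ω | X (-1) ω = X 0 ω} + μ {ω | X 0 ω = X 1 ω}
        + μ {ω | X (-1) ω = X 1 ω} := by
          refine le_trans (measure_union_le _ _) ?_
          gcongr
          exact measure_union_le _ _
      _ = 0 := by
          rw [hdiag (-1) 0 (by decide), hdiag 0 1 (by decide), hdiag (-1) 1 (by decide)]
          simp
  have hdisj1 : Disjoint M0 Mm := by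
    rw [Set.disjoint_left]
    intro ω h0 hm
    simp only [hM0, hMm, mem_setOf_eq] at h0 hm
    linarith [h0.1.1, hm.1.1]
  have hdisj2 : Disjoint (M0 ∪ Mm) Mp := by
    rw [Set.disjoint_left]
    intro ω h0 hpp
    simp only [hM0, hMm, hMp, mem_union, mem_setOf_eq] at h0 hpp
    rcases h0 with h | h
    · linarith [h.2.1, hpp.2.1]
    · linarith [h.2.1, hpp.1.1, hpp.2.1]
  have hunion : μ (M0 ∪ Mm ∪ Mp) = μ M0 + μ Mm + μ Mp := by
    rw [measure_union hdisj2 hMpmeas, measure_union hdisj1 hMmmeas]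
  -- box has measure q ^ 3
  have hpq : ν (Iic u) = p := by
    rw [hν, Measure.map_apply (hmeas 0) measurableSet_Iic]
    exact hp
  have hqν : ν (Ioi u) = q := by
    have : Ioi u = (Iic u)ᶜ := by simp
    rw [this, measure_compl measurableSet_Iic (measure_ne_top ν _), hpq,
      measure_univ, hq]
  have hboxval : μ {ω | u < X (-1) ω ∧ u < X 0 ω ∧ u < X 1 ω} = q ^ 3 := by
    rw [hbox (-1) 0 1 (by decide) (by decide) (by decide), hqν]
  -- conclude μ(M0 ∪ Mm ∪ Mp) = q ^ 3
  have hkey : μ (M0 ∪ Mm ∪ Mp) = q ^ 3 := by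
    refine le_antisymm ?_ ?_
    · rw [← hboxval]; exact measure_mono hsub'
    · rw [← hboxval]
      calc μ {ω | u < X (-1) ω ∧ u < X 0 ω ∧ u < X 1 ω}
          ≤ μ ((M0 ∪ Mm ∪ Mp) ∪ _) := measure_mono hsub
        _ ≤ μ (M0 ∪ Mm ∪ Mp) + μ _ := measure_union_le _ _
        _ = μ (M0 ∪ Mm ∪ Mp) := by rw [hties, add_zero]
  have h3 : 3 * μ M0 = q ^ 3 := by
    rw [← hkey, hunion, hM0val, hMmval, hMpval]
    ring
  have hM0final : μ M0 = q ^ 3 / 3 :=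
    (ENNReal.eq_div_iff (by norm_num) (by norm_num)).mpr h3
  -- independence between (X (-2), X 2) and (X (-1), X 0, X 1)
  have hindep2 : IndepFun (fun ω => (X (-2) ω, X 2 ω))
      (fun ω => (X (-1) ω, (X 0 ω, X 1 ω))) μ := by
    have h := hindep.indepFun_finset {-2, 2} {-1, 0, 1} (by decide) hmeas
    have g1 : Measurable fun v : (({-2, 2} : Finset ℤ) → ℝ) =>
        (v ⟨-2, by decide⟩, v ⟨2, by decide⟩) := by fun_prop
    have g2 : Measurable fun v : (({-1, 0, 1} : Finset ℤ) → ℝ) =>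
        (v ⟨-1, by decide⟩, (v ⟨0, by decide⟩, v ⟨1, by decide⟩)) := by fun_prop
    exact h.comp g1 g2
  -- the pair part
  have hpair2 : μ {ω | X (-2) ω ≤ u ∧ X 2 ω ≤ u} = p ^ 2 := by
    have hSm : MeasurableSet ((Iic u) ×ˢ (Iic u) : Set (ℝ × ℝ)) :=
      measurableSet_Iic.prod measurableSet_Iic
    have h1 : μ {ω | X (-2) ω ≤ u ∧ X 2 ω ≤ u}
        = (μ.map (fun ω => (X (-2) ω, X 2 ω))) ((Iic u) ×ˢ (Iic u)) := by
      rw [Measure.map_apply ((hmeas (-2)).prodMk (hmeas 2)) hSm]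
      rfl
    rw [h1, hmap_pair (-2) 2 (by decide), Measure.prod_prod, hpq, sq]
  -- assemble
  set s : Set (ℝ × ℝ) := (Iic u) ×ˢ (Iic u) with hs
  set t : Set (ℝ × ℝ × ℝ) :=
    {pr | (pr.1 < pr.2.1 ∧ u < pr.1) ∧ (pr.2.2 < pr.2.1 ∧ u < pr.2.2)} with ht
  have hsm : MeasurableSet s := measurableSet_Iic.prod measurableSet_Iic
  have htm : MeasurableSet t := by
    apply MeasurableSet.inter
    · exact MeasurableSet.inter
        (measurableSet_lt measurable_fst (measurable_fst.comp measurable_snd))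
        (measurableSet_lt measurable_const measurable_fst)
    · exact MeasurableSet.inter
        (measurableSet_lt (measurable_snd.comp measurable_snd)
          (measurable_fst.comp measurable_snd))
        (measurableSet_lt measurable_const (measurable_snd.comp measurable_snd))
  have hevent : {ω | X (-2) ω ≤ u ∧ (X (-1) ω < X 0 ω ∧ u < X (-1) ω) ∧
        (X 1 ω < X 0 ω ∧ u < X 1 ω) ∧ X 2 ω ≤ u}
      = (fun ω => (X (-2) ω, X 2 ω)) ⁻¹' s
        ∩ (fun ω => (X (-1) ω, (X 0 ω, X 1 ω))) ⁻¹' t := by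
    ext ω
    simp only [hs, ht, mem_setOf_eq, mem_inter_iff, mem_preimage, mem_prod, mem_Iic]
    tauto
  have hpreS : (fun ω => (X (-2) ω, X 2 ω)) ⁻¹' s = {ω | X (-2) ω ≤ u ∧ X 2 ω ≤ u} := by
    ext ω; simp [hs]
  have hpreT : (fun ω => (X (-1) ω, (X 0 ω, X 1 ω))) ⁻¹' t = M0 := by
    ext ω; simp only [ht, hM0, mem_preimage, mem_setOf_eq]
  rw [hevent, hindep2.measure_inter_preimage_eq_mul s t hsm htm, hpreS, hpreT,
    hpair2, hM0final]
  rw [ENNReal.div_eq_inv_mul, ENNReal.div_eq_inv_mul]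
  ring
end
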